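/- The ideal I_G = ⋂_{{i,j}∈G} P_{ij} is generated by the monomials x_i x_j, where {i,j} ranges over the non-edges of G (pairs of distinct vertices that are not adjacent in G), together with the monomials x_i x_j x_k, where {i,j,k} ranges over the triangles of G (triples of pairwise adjacent vertices). -/
import Mathlib

open MvPolynomial

/-- The prime ideal `P_{ij}` of `S = k[x_1,…,x_n]` generated by all variables `x_t`
with `t ∉ {i,j}`. -/
noncomputable def varPrime (k : Type) [Field k] {n : ℕ} (i j : Fin n) :
    Ideal (MvPolynomial (Fin n) k) :=
  Ideal.span ((fun t => (X t : MvPolynomial (Fin n) k)) '' {t | t ≠ i ∧ t ≠ j})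

/-- The `m`-th symbolic power `I_G^{(m)} = ⋂_{{i,j} ∈ G} P_{ij}^m`; for `m = 1` this is
the ideal `I_G` itself. -/
noncomputable def symbolicPower (k : Type) [Field k] {n : ℕ} (G : SimpleGraph (Fin n))
    (m : ℕ) : Ideal (MvPolynomial (Fin n) k) :=
  ⨅ (i : Fin n) (j : Fin n) (_ : G.Adj i j), (varPrime k i j) ^ m

lemma mem_varPrime (k : Type) [Field k] {n : ℕ} (i j : Fin n)
    {p : MvPolynomial (Fin n) k} :
    p ∈ varPrime k i j ↔ ∀ m ∈ p.support, ∃ t, (t ≠ i ∧ t ≠ j) ∧ (m : Fin n →₀ ℕ) t ≠ 0 := by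
  rw [varPrime, mem_ideal_span_X_image]
  simp [Set.mem_setOf_eq]

lemma combo {n : ℕ} (G : SimpleGraph (Fin n)) (hn : 0 < n)
    (hG : ∀ v : Fin n, ∃ u : Fin n, G.Adj v u) (d : Fin n →₀ ℕ)
    (h : ∀ a b, G.Adj a b → ∃ t, (t ≠ a ∧ t ≠ b) ∧ d t ≠ 0) :
    (∃ i j, i ≠ j ∧ ¬G.Adj i j ∧ d i ≠ 0 ∧ d j ≠ 0) ∨
    (∃ i j l, G.Adj i j ∧ G.Adj j l ∧ G.Adj i l ∧ d i ≠ 0 ∧ d j ≠ 0 ∧ d l ≠ 0) := by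
  by_cases hcase : ∃ i j, i ≠ j ∧ ¬G.Adj i j ∧ d i ≠ 0 ∧ d j ≠ 0
  · exact Or.inl hcase
  · right
    have hclq : ∀ i j, d i ≠ 0 → d j ≠ 0 → i ≠ j → G.Adj i j := by
      intro i j hi hj hij
      by_contra hA
      exact hcase ⟨i, j, hij, hA, hi, hj⟩
    obtain ⟨u0, hu0⟩ := hG ⟨0, hn⟩
    obtain ⟨t, _, ht⟩ := h _ _ hu0
    obtain ⟨u, hu⟩ := hG t
    obtain ⟨s, ⟨hs1, _⟩, hs⟩ := h t u hu
    have hts : G.Adj t s := hclq t s ht hs (fun e => hs1 e.symm)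
    obtain ⟨r, ⟨hr1, hr2⟩, hr⟩ := h t s hts
    exact ⟨t, s, r, hts, hclq s r hs hr (fun e => hr2 e.symm),
      hclq t r ht hr (fun e => hr1 e.symm), ht, hs, hr⟩

lemma two_dvd_monomial (k : Type) [Field k] {n : ℕ} {i j : Fin n} (hij : i ≠ j)
    {d : Fin n →₀ ℕ} (hi : d i ≠ 0) (hj : d j ≠ 0) (c : k) :
    (X i * X j : MvPolynomial (Fin n) k) ∣ monomial d c := by
  have hX : (X i * X j : MvPolynomial (Fin n) k)
      = monomial (Finsupp.single i 1 + Finsupp.single j 1) 1 := by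
    rw [X, X, monomial_mul, one_mul]
  rw [hX]
  refine monomial_dvd_monomial.2 ⟨Or.inr ?_, one_dvd _⟩
  intro s
  simp only [Finsupp.add_apply, Finsupp.single_apply]
  by_cases ha : i = s <;> by_cases hb : j = s <;> simp_all <;> omega

lemma three_dvd_monomial (k : Type) [Field k] {n : ℕ} {i j l : Fin n}
    (hij : i ≠ j) (hjl : j ≠ l) (hil : i ≠ l)
    {d : Fin n →₀ ℕ} (hi : d i ≠ 0) (hj : d j ≠ 0) (hl : d l ≠ 0) (c : k) :
    (X i * X j * X l : MvPolynomial (Fin n) k) ∣ monomial d c := by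
  have hX : (X i * X j * X l : MvPolynomial (Fin n) k)
      = monomial (Finsupp.single i 1 + Finsupp.single j 1 + Finsupp.single l 1) 1 := by
    rw [X, X, X, monomial_mul, monomial_mul, one_mul, one_mul]
  rw [hX]
  refine monomial_dvd_monomial.2 ⟨Or.inr ?_, one_dvd _⟩
  intro s
  simp only [Finsupp.add_apply, Finsupp.single_apply]
  by_cases ha : i = s <;> by_cases hb : j = s <;> by_cases hc : l = s <;>
    simp_all <;> omega

lemma avoid_edge {n : ℕ} {G : SimpleGraph (Fin n)} {i j a b : Fin n}
    (hij : i ≠ j) (hnadj : ¬G.Adj i j) (hab : G.Adj a b) :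
    (i ≠ a ∧ i ≠ b) ∨ (j ≠ a ∧ j ≠ b) := by
  by_cases hia : i = a
  · by_cases hjb : j = b
    · subst hia hjb; exact absurd hab hnadj
    · by_cases hja : j = a
      · subst hia hja; exact absurd rfl hij
      · exact Or.inr ⟨hja, hjb⟩
  · by_cases hib : i = b
    · by_cases hja : j = a
      · subst hib hja; exact absurd hab.symm hnadj
      · by_cases hjb : j = b
        · subst hib hjb; exact absurd rfl hij
        · exact Or.inr ⟨hja, hjb⟩
    · exact Or.inl ⟨hia, hib⟩

lemma avoid_edge3 {n : ℕ} {i j l a b : Fin n}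
    (hij : i ≠ j) (hjl : j ≠ l) (hil : i ≠ l) :
    (i ≠ a ∧ i ≠ b) ∨ (j ≠ a ∧ j ≠ b) ∨ (l ≠ a ∧ l ≠ b) := by
  by_contra h
  push_neg at h
  obtain ⟨h1, h2, h3⟩ := h
  by_cases hia : i = a
  · by_cases hja : j = a
    · exact hij (hia.trans hja.symm)
    · have hjb := h2 hja
      by_cases hla : l = a
      · exact hil (hia.trans hla.symm)
      · exact hjl (hjb.trans (h3 hla).symm)
  · have hib := h1 hia
    by_cases hja : j = a
    · by_cases hla : l = a
      · exact hjl (hja.trans hla.symm)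
      · exact hil (hib.trans (h3 hla).symm)
    · exact hij (hib.trans (h2 hja).symm)

/-- The ideal `I_G = ⋂_{{i,j} ∈ G} P_{ij}` is generated by the monomials `x_i x_j`
for the non-edges `{i,j}` of `G` together with the monomials `x_i x_j x_l` for the
triangles `{i,j,l}` of `G`. -/
theorem stmt_17 (k : Type) [Field k] (n : ℕ) (hn : 3 ≤ n)
    (G : SimpleGraph (Fin n)) (hG : ∀ v : Fin n, ∃ u : Fin n, G.Adj v u) :
    symbolicPower k G 1 =
      Ideal.span
        ({ p : MvPolynomial (Fin n) k | ∃ i j : Fin n, i ≠ j ∧ ¬ G.Adj i j ∧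
            p = X i * X j } ∪
         { p : MvPolynomial (Fin n) k | ∃ i j l : Fin n, G.Adj i j ∧ G.Adj j l ∧
            G.Adj i l ∧ p = X i * X j * X l }) := by
  apply le_antisymm
  · intro f hf
    simp only [symbolicPower] at hf
    have hf' : ∀ a b, G.Adj a b → ∀ m ∈ f.support, ∃ t, (t ≠ a ∧ t ≠ b) ∧
        (m : Fin n →₀ ℕ) t ≠ 0 := by
      intro a b hab
      have h1 := Ideal.mem_iInf.1 hf a
      have h2 := Ideal.mem_iInf.1 h1 b
      have h3 := Ideal.mem_iInf.1 h2 hab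
      rw [pow_one] at h3
      exact (mem_varPrime k a b).1 h3
    rw [f.as_sum]
    refine Ideal.sum_mem _ fun d hd => ?_
    rcases combo G (by omega) hG d (fun a b hab => hf' a b hab d hd) with
      ⟨i, j, hij, hnadj, hi, hj⟩ | ⟨i, j, l, h1, h2, h3, hi, hj, hl⟩
    · obtain ⟨q, hq⟩ := two_dvd_monomial k hij hi hj (coeff d f)
      rw [hq]
      exact Ideal.mul_mem_right _ _ (Ideal.subset_span (Or.inl ⟨i, j, hij, hnadj, rfl⟩))
    · obtain ⟨q, hq⟩ := three_dvd_monomial k h1.ne h2.ne h3.ne hi hj hl (coeff d f)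
      rw [hq]
      exact Ideal.mul_mem_right _ _ (Ideal.subset_span (Or.inr ⟨i, j, l, h1, h2, h3, rfl⟩))
  · rw [Ideal.span_le]
    rintro p (⟨i, j, hij, hnadj, rfl⟩ | ⟨i, j, l, h1, h2, h3, rfl⟩) <;>
      simp only [symbolicPower, SetLike.mem_coe] <;>
      refine Ideal.mem_iInf.2 fun a => Ideal.mem_iInf.2 fun b =>
        Ideal.mem_iInf.2 fun hab => ?_ <;> rw [pow_one]
    · rcases avoid_edge hij hnadj hab with ⟨ha, hb⟩ | ⟨ha, hb⟩
      · exact Ideal.mul_mem_right _ _ (Ideal.subset_span ⟨i, ⟨ha, hb⟩, rfl⟩)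
      · rw [mul_comm]
        exact Ideal.mul_mem_right _ _ (Ideal.subset_span ⟨j, ⟨ha, hb⟩, rfl⟩)
    · rcases avoid_edge3 h1.ne h2.ne h3.ne (a := a) (b := b) with
        ⟨ha, hb⟩ | ⟨ha, hb⟩ | ⟨ha, hb⟩
      · have he : (X i * X j * X l : MvPolynomial (Fin n) k) = X i * (X j * X l) := by ring
        rw [he]; exact Ideal.mul_mem_right _ _ (Ideal.subset_span ⟨i, ⟨ha, hb⟩, rfl⟩)
      · have he : (X i * X j * X l : MvPolynomial (Fin n) k) = X j * (X i * X l) := by ring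
        rw [he]; exact Ideal.mul_mem_right _ _ (Ideal.subset_span ⟨j, ⟨ha, hb⟩, rfl⟩)
      · have he : (X i * X j * X l : MvPolynomial (Fin n) k) = X l * (X i * X j) := by ring
        rw [he]; exact Ideal.mul_mem_right _ _ (Ideal.subset_span ⟨l, ⟨ha, hb⟩, rfl⟩)
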